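/- With W = 1 + w₁S^{−1} + w₂S^{−2} + ⋯ a formal difference operator and res the coefficient of S⁰, one has res(W S² W^{−1}) = (1−S)(w₂ + Sw₂ − w₁·Sw₁), where S is the shift automorphism and products are pointwise products of functions. -/
import Mathlib


open Finset

/-- The shift operator `S^j`: `(Sh γ j f)(x) = f(x + jγ)`. -/
def Sh (γ : ℝ) (j : ℤ) (f : ℝ → ℂ) : ℝ → ℂ := fun x => f (x + j * γ)

lemma Sh_one (γ : ℝ) (j : ℤ) : Sh γ j (1 : ℝ → ℂ) = 1 := rfl

lemma Sh_zero (γ : ℝ) (f : ℝ → ℂ) : Sh γ 0 f = f := by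
  funext x; simp [Sh]

theorem stmt9 (γ : ℝ) (w v : ℕ → ℝ → ℂ)
    (hw0 : w 0 = 1) (hv0 : v 0 = 1)
    (hinv : ∀ l : ℕ, 1 ≤ l →
      ∑ i ∈ Finset.range (l + 1), w i * Sh γ (-(i : ℤ)) (v (l - i)) = 0) :
    ∑ i ∈ Finset.range 3, w i * Sh γ ((2 : ℤ) - (i : ℤ)) (v (2 - i))
      = (w 2 + Sh γ 1 (w 2) - w 1 * Sh γ 1 (w 1))
        - Sh γ 1 (w 2 + Sh γ 1 (w 2) - w 1 * Sh γ 1 (w 1)) := by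
  have h1 := hinv 1 (le_refl 1)
  have h2 := hinv 2 (by norm_num)
  simp only [Finset.sum_range_succ, Finset.sum_range_zero, zero_add, hw0, hv0,
    Sh_one, Sh_zero, one_mul, mul_one, Nat.cast_zero, Nat.cast_one, Nat.cast_ofNat,
    neg_zero, Nat.sub_self] at h1 h2
  -- h1 : v 1 + w 1 = 0
  have hv1 : v 1 = -(w 1) := by linear_combination h1
  have hv2 : v 2 = w 1 * Sh γ (-1) (w 1) - w 2 := by
    rw [show (1:ℕ) = 2 - 1 from rfl] at hv1
    rw [hv1] at h2
    have : Sh γ (-1) (-(w 1)) = -(Sh γ (-1) (w 1)) := rfl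
    rw [this] at h2
    linear_combination h2
  funext x
  simp only [Finset.sum_range_succ, Finset.sum_range_zero, zero_add, hw0, hv0, hv1, hv2,
    Sh, Pi.add_apply, Pi.sub_apply, Pi.mul_apply, Pi.one_apply, Pi.neg_apply,
    Nat.cast_zero, Nat.cast_one, Nat.cast_ofNat]
  push_cast
  ring_nf
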